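/- For a fixed nonzero quaternion p, the ℝ-linear map d ↦ p·conj(d) − d·conj(p) from ℍ to the space of pure quaternions (span of i, j, k) is surjective, and its kernel is the line spanned by p. -/

import Mathlib

open Polynomial TrivSqZeroExt Quaternion

noncomputable section

/-- the ring of dual numbers 𝔻 = ℝ[ε]/⟨ε²⟩ -/
abbrev DD : Type := DualNumber ℝ
/-- the Hamiltonian quaternions ℍ -/
abbrev HH : Type := Quaternion ℝ
/-- the dual quaternions 𝔻ℍ, realized as quaternions over the dual numbers -/
abbrev DH : Type := Quaternion DD

/-- embedding of the real quaternions into the dual quaternions -/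
def ofQ (p : HH) : DH := ⟨inl p.re, inl p.imI, inl p.imJ, inl p.imK⟩

/-- ε as a dual quaternion -/
def εq : DH := ((DualNumber.eps : DD) : DH)

/-- primal part of a dual quaternion -/
def primal (q : DH) : HH := ⟨(q.re).fst, (q.imI).fst, (q.imJ).fst, (q.imK).fst⟩

/-- dual part of a dual quaternion -/
def dualPart (q : DH) : HH := ⟨(q.re).snd, (q.imI).snd, (q.imJ).snd, (q.imK).snd⟩

/-- coefficientwise conjugate of a dual quaternion polynomial -/
def pconj (M : Polynomial DH) : Polynomial DH := ∑ i ∈ M.support, C (star (M.coeff i)) * X ^ i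

/-- coefficientwise conjugate of a quaternion polynomial -/
def qpconj (P : Polynomial HH) : Polynomial HH := ∑ i ∈ P.support, C (star (P.coeff i)) * X ^ i

/-- primal part of a dual quaternion polynomial -/
def Ppart (M : Polynomial DH) : Polynomial HH := ∑ i ∈ M.support, C (primal (M.coeff i)) * X ^ i

/-- dual part of a dual quaternion polynomial -/
def Dpart (M : Polynomial DH) : Polynomial HH := ∑ i ∈ M.support, C (dualPart (M.coeff i)) * X ^ i

/-- primal part of a dual number polynomial -/
def dpr (p : Polynomial DD) : Polynomial ℝ := ∑ i ∈ p.support, C ((p.coeff i).fst) * X ^ i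

/-- the dual number polynomial f + εg built from two real polynomials -/
def dpoly (f g : Polynomial ℝ) : Polynomial DD :=
  f.map (algebraMap ℝ DD) + (DualNumber.eps : DD) • g.map (algebraMap ℝ DD)

/-- embedding of quaternion polynomials into dual quaternion polynomials -/
def toDQp (P : Polynomial HH) : Polynomial DH := ∑ i ∈ P.support, C (ofQ (P.coeff i)) * X ^ i

/-- the quaternion unit i -/
def qi : HH := ⟨0, 1, 0, 0⟩
/-- the quaternion unit j -/
def qj : HH := ⟨0, 0, 1, 0⟩
/-- the quaternion unit k -/
def qk : HH := ⟨0, 0, 0, 1⟩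

/-- For fixed nonzero p, the ℝ-linear map d ↦ p·conj(d) − d·conj(p) maps ℍ onto the pure
quaternions and its kernel is the line spanned by p. -/
theorem stmt5 (p : HH) (hp : p ≠ 0) (φ : HH → HH) (hφ : ∀ d, φ d = p * star d - d * star p) :
    (∀ d, (φ d).re = 0) ∧
    (∀ (c : ℝ) (d₁ d₂ : HH), φ (c • d₁ + d₂) = c • φ d₁ + φ d₂) ∧
    (∀ v : HH, v.re = 0 → ∃ d, φ d = v) ∧
    (∀ d, φ d = 0 ↔ ∃ c : ℝ, d = c • p) := by
  have hn : normSq p ≠ 0 := by simpa using hp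
  refine ⟨?_, ?_, ?_, ?_⟩
  · intro d; simp [hφ, Quaternion.re_mul]; ring
  · intro c d₁ d₂
    simp only [hφ]
    ext <;> simp <;> ring
  · intro v hv
    have hsv : star v = -v := by ext <;> simp [hv]
    refine ⟨(-(1/(2*normSq p))) • (v * p), ?_⟩
    have key : p * star (v * p) - (v * p) * star p = (-(2 * normSq p)) • v := by
      rw [star_mul, hsv, mul_neg, mul_assoc, Quaternion.self_mul_star, mul_neg, ← mul_assoc,
        Quaternion.self_mul_star, Quaternion.coe_mul_eq_smul, Quaternion.mul_coe_eq_smul]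
      module
    rw [hφ, Quaternion.star_smul, mul_smul_comm, smul_mul_assoc, ← smul_sub, key, smul_smul]
    rw [show (-(1/(2*normSq p))) * (-(2 * normSq p)) = 1 by field_simp, one_smul]
  · intro d
    constructor
    · intro h0
      rw [hφ, sub_eq_zero] at h0
      have hsa : star (p * star d) = p * star d := by
        rw [star_mul, star_star, ← h0]
      set r : ℝ := (p * star d).re with hr
      have hreal : p * star d = (r : HH) := by
        ext
        · simp [hr]
        · have := congrArg QuaternionAlgebra.imI hsa; simp at this ⊢; linarith
        · have := congrArg QuaternionAlgebra.imJ hsa; simp at this ⊢; linarith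
        · have := congrArg QuaternionAlgebra.imK hsa; simp at this ⊢; linarith
      have hsd : star d = p⁻¹ * (r : HH) := by
        rw [← hreal, ← mul_assoc, inv_mul_cancel₀ hp, one_mul]
      refine ⟨r / normSq p, ?_⟩
      have hd : d = star (p⁻¹ * (r : HH)) := by rw [← hsd, star_star]
      rw [hd, star_mul, star_coe, Quaternion.inv_def, Quaternion.star_smul, star_star,
        Quaternion.coe_mul_eq_smul, smul_smul]
      rw [div_eq_mul_inv]
    · rintro ⟨c, rfl⟩
      rw [hφ]
      ext <;> simp <;> ring
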